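/- Continuation Principle for the LL-domination game: Let G be a finite simple graph without isolated vertices and let B ⊆ A ⊆ V(G). Then γ_LLg(G|A) ≤ γ_LLg(G|B) and γ'_LLg(G|A) ≤ γ'_LLg(G|B). -/
import Mathlib


/- Formalization of the domination games from "The variety of domination games".

A game is specified by a legality predicate `legal : List V → V → Prop`, where the list
records the previously played vertices (most recent first).  Players alternate moves;
each move must be legal; the game ends when no legal move exists.  Dominator wants to
minimize, Staller to maximize, the total number of moves.

`canEnd legal k turn h` states that, with history `h` and the player to move given by
`turn` (`true` = Dominator), Dominator can guarantee that at most `k` further moves are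
played (against any play of Staller).  The value of the game under optimal play by both
players is then the least such `k` from the empty history. -/

/-- The closed neighborhood `N[v]` of a vertex. -/
def closedNbhd {V : Type*} (G : SimpleGraph V) (v : V) : Set V :=
  insert v (G.neighborSet v)

/-- `⋃_{u ∈ h} N[u]` : the set of vertices dominated by the moves in `h`. -/
def dominatedBy {V : Type*} (G : SimpleGraph V) (h : List V) : Set V :=
  ⋃ u ∈ h, closedNbhd G u

/-- `⋃_{u ∈ h} N(u)` : the set of vertices totally dominated by the moves in `h`. -/
def totDominatedBy {V : Type*} (G : SimpleGraph V) (h : List V) : Set V :=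
  ⋃ u ∈ h, G.neighborSet u

/-- Legality in the domination game: `N[v] \ ⋃_{j<i} N[v_j] ≠ ∅`. -/
def dgLegal {V : Type*} (G : SimpleGraph V) (h : List V) (v : V) : Prop :=
  (closedNbhd G v \ dominatedBy G h).Nonempty

/-- Legality in the total domination game: `N(v) \ ⋃_{j<i} N(v_j) ≠ ∅`. -/
def tgLegal {V : Type*} (G : SimpleGraph V) (h : List V) (v : V) : Prop :=
  (G.neighborSet v \ totDominatedBy G h).Nonempty

/-- Legality in the Z-domination game on `G|A`: `N(v) \ (A ∪ ⋃_{j<i} N[v_j]) ≠ ∅`. -/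
def zLegal {V : Type*} (G : SimpleGraph V) (A : Set V) (h : List V) (v : V) : Prop :=
  (G.neighborSet v \ (A ∪ dominatedBy G h)).Nonempty

/-- Legality in the LL-domination game on `G|A`: `N[v] \ (A ∪ ⋃_{j<i} N(v_j)) ≠ ∅`. -/
def llLegal {V : Type*} (G : SimpleGraph V) (A : Set V) (h : List V) (v : V) : Prop :=
  (closedNbhd G v \ (A ∪ totDominatedBy G h)).Nonempty

/-- Legality in the L-domination game on `G|A`: as in the LL-game, and moreover no vertex
may be played twice. -/
def lLegal {V : Type*} (G : SimpleGraph V) (A : Set V) (h : List V) (v : V) : Prop :=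
  llLegal G A h v ∧ v ∉ h

/-- `canEnd legal k turn h` : with previously played vertices `h` and the player to move
given by `turn` (`true` = Dominator, `false` = Staller), Dominator has a strategy
guaranteeing that at most `k` further moves are made. -/
def canEnd {V : Type*} (legal : List V → V → Prop) : ℕ → Bool → List V → Prop
  | 0, _, h => ∀ v, ¬ legal h v
  | k+1, true, h => (∀ v, ¬ legal h v) ∨ ∃ v, legal h v ∧ canEnd legal k false (v :: h)
  | k+1, false, h => ∀ v, legal h v → canEnd legal k true (v :: h)

/-- The number of moves in the game with legality predicate `legal` when both players play
optimally (Dominator minimizing, Staller maximizing the number of moves); `dFirst = true`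
means Dominator makes the first move. -/
noncomputable def gameVal {V : Type*} (legal : List V → V → Prop) (dFirst : Bool) : ℕ :=
  sInf {k | canEnd legal k dFirst []}

/-- The game Z-domination number `γ_Zg(G|A)` (Dominator starts). -/
noncomputable def gammaZgA {V : Type*} (G : SimpleGraph V) (A : Set V) : ℕ :=
  gameVal (zLegal G A) true

/-- The Staller-start game Z-domination number `γ'_Zg(G|A)`. -/
noncomputable def gammaZgA' {V : Type*} (G : SimpleGraph V) (A : Set V) : ℕ :=
  gameVal (zLegal G A) false

/-- The game L-domination number `γ_Lg(G|A)` (Dominator starts). -/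
noncomputable def gammaLgA {V : Type*} (G : SimpleGraph V) (A : Set V) : ℕ :=
  gameVal (lLegal G A) true

/-- The Staller-start game L-domination number `γ'_Lg(G|A)`. -/
noncomputable def gammaLgA' {V : Type*} (G : SimpleGraph V) (A : Set V) : ℕ :=
  gameVal (lLegal G A) false

/-- The game LL-domination number `γ_LLg(G|A)` (Dominator starts). -/
noncomputable def gammaLLgA {V : Type*} (G : SimpleGraph V) (A : Set V) : ℕ :=
  gameVal (llLegal G A) true

/-- The Staller-start game LL-domination number `γ'_LLg(G|A)`. -/
noncomputable def gammaLLgA' {V : Type*} (G : SimpleGraph V) (A : Set V) : ℕ :=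
  gameVal (llLegal G A) false

/-- The game domination number `γ_g(G)` (Dominator starts). -/
noncomputable def gammaG {V : Type*} (G : SimpleGraph V) : ℕ :=
  gameVal (dgLegal G) true

/-- The game total domination number `γ_tg(G)` (Dominator starts). -/
noncomputable def gammaTg {V : Type*} (G : SimpleGraph V) : ℕ :=
  gameVal (tgLegal G) true

/-- The game Z-domination number `γ_Zg(G)` (Dominator starts). -/
noncomputable def gammaZg {V : Type*} (G : SimpleGraph V) : ℕ := gammaZgA G ∅

/-- The Staller-start game Z-domination number `γ'_Zg(G)`. -/
noncomputable def gammaZg' {V : Type*} (G : SimpleGraph V) : ℕ := gammaZgA' G ∅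

/-- The game L-domination number `γ_Lg(G)` (Dominator starts). -/
noncomputable def gammaLg {V : Type*} (G : SimpleGraph V) : ℕ := gammaLgA G ∅

/-- The Staller-start game L-domination number `γ'_Lg(G)`. -/
noncomputable def gammaLg' {V : Type*} (G : SimpleGraph V) : ℕ := gammaLgA' G ∅

/-- The game LL-domination number `γ_LLg(G)` (Dominator starts). -/
noncomputable def gammaLLg {V : Type*} (G : SimpleGraph V) : ℕ := gammaLLgA G ∅

/-- The Staller-start game LL-domination number `γ'_LLg(G)`. -/
noncomputable def gammaLLg' {V : Type*} (G : SimpleGraph V) : ℕ := gammaLLgA' G ∅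

/-- `G` has no isolated vertices. -/
def isolateFree {V : Type*} (G : SimpleGraph V) : Prop := ∀ v : V, ∃ u, G.Adj v u

/-- The domination number `γ(G)`. -/
noncomputable def domNum {V : Type*} (G : SimpleGraph V) : ℕ :=
  sInf {k | ∃ S : Finset V, S.card = k ∧ ∀ v : V, ∃ u ∈ S, v ∈ closedNbhd G u}

/-- The total domination number `γ_t(G)`. -/
noncomputable def totDomNum {V : Type*} (G : SimpleGraph V) : ℕ :=
  sInf {k | ∃ S : Finset V, S.card = k ∧ ∀ v : V, ∃ u ∈ S, G.Adj u v}

section ContinuationAux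

variable {V : Type*}

lemma totDominatedBy_cons (G : SimpleGraph V) (v : V) (h : List V) :
    totDominatedBy G (v :: h) = G.neighborSet v ∪ totDominatedBy G h := by
  ext x
  simp [totDominatedBy, List.mem_cons, or_and_right, exists_or]

lemma totDominatedBy_subset_cons (G : SimpleGraph V) (v : V) (h : List V) :
    totDominatedBy G h ⊆ totDominatedBy G (v :: h) := by
  rw [totDominatedBy_cons]; exact Set.subset_union_right

lemma canEnd_mono {legal : List V → V → Prop} :
    ∀ (k : ℕ) (t : Bool) (h : List V), canEnd legal k t h → canEnd legal (k + 1) t h := by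
  intro k
  induction k with
  | zero =>
    intro t h hc
    cases t
    · intro v hv; exact absurd hv (hc v)
    · exact Or.inl hc
  | succ k ih =>
    intro t h hc
    cases t
    · intro v hv; exact ih true _ (hc v hv)
    · rcases hc with hdead | ⟨v, hv, hc⟩
      · exact Or.inl hdead
      · exact Or.inr ⟨v, hv, ih false _ hc⟩

lemma canEnd_le {legal : List V → V → Prop} {k k' : ℕ} (hk : k ≤ k') {t : Bool} {h : List V}
    (hc : canEnd legal k t h) : canEnd legal k' t h := by
  induction hk with
  | refl => exact hc
  | step _ ih => exact canEnd_mono _ _ _ ih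

lemma llLegal_mono (G : SimpleGraph V) (A B : Set V) {h1 h2 : List V}
    (hinv : B ∪ totDominatedBy G h2 ⊆ A ∪ totDominatedBy G h1)
    {v : V} (hv : llLegal G A h1 v) : llLegal G B h2 v := by
  obtain ⟨w, hw1, hw2⟩ := hv
  exact ⟨w, hw1, fun hmem => hw2 (hinv hmem)⟩

lemma inv_cons (G : SimpleGraph V) (A B : Set V) {h1 h2 : List V} (v : V)
    (hinv : B ∪ totDominatedBy G h2 ⊆ A ∪ totDominatedBy G h1) :
    B ∪ totDominatedBy G (v :: h2) ⊆ A ∪ totDominatedBy G (v :: h1) := by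
  rw [totDominatedBy_cons, totDominatedBy_cons]
  intro x hx
  rcases hx with hx | hx | hx
  · rcases hinv (Or.inl hx) with h | h
    · exact Or.inl h
    · exact Or.inr (Or.inr h)
  · exact Or.inr (Or.inl hx)
  · rcases hinv (Or.inr hx) with h | h
    · exact Or.inl h
    · exact Or.inr (Or.inr h)

lemma inv_extend (G : SimpleGraph V) (A B : Set V) {h1 h2 : List V} (v : V)
    (hinv : B ∪ totDominatedBy G h2 ⊆ A ∪ totDominatedBy G h1) :
    B ∪ totDominatedBy G h2 ⊆ A ∪ totDominatedBy G (v :: h1) :=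
  hinv.trans (Set.union_subset_union_right A (totDominatedBy_subset_cons G v h1))

/-- The key continuation triple, by induction on the remaining budget. -/
lemma continuation_key (G : SimpleGraph V) (A B : Set V) : ∀ k : ℕ,
    (∀ (t : Bool) (h1 h2 : List V), B ∪ totDominatedBy G h2 ⊆ A ∪ totDominatedBy G h1 →
      canEnd (llLegal G B) k t h2 → canEnd (llLegal G A) k t h1)
    ∧ (∀ (h1 h2 : List V), B ∪ totDominatedBy G h2 ⊆ A ∪ totDominatedBy G h1 →
      canEnd (llLegal G B) k true h2 → canEnd (llLegal G A) (k + 1) false h1)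
    ∧ (∀ (h1 h2 : List V), B ∪ totDominatedBy G h2 ⊆ A ∪ totDominatedBy G h1 →
      canEnd (llLegal G B) k false h2 → canEnd (llLegal G A) (k + 1) true h1) := by
  intro k
  induction k with
  | zero =>
    refine ⟨?_, ?_, ?_⟩
    · intro t h1 h2 hinv hc
      cases t <;> exact fun v hv => hc v (llLegal_mono G A B hinv hv)
    · intro h1 h2 hinv hc
      intro v hv
      intro u hu
      exact hc u (llLegal_mono G A B (inv_extend G A B v hinv) hu)
    · intro h1 h2 hinv hc
      exact Or.inl fun v hv => hc v (llLegal_mono G A B hinv hv)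
  | succ k ih =>
    obtain ⟨ihI, ihP1, ihP2⟩ := ih
    have hI : ∀ (t : Bool) (h1 h2 : List V),
        B ∪ totDominatedBy G h2 ⊆ A ∪ totDominatedBy G h1 →
        canEnd (llLegal G B) (k + 1) t h2 → canEnd (llLegal G A) (k + 1) t h1 := by
      intro t h1 h2 hinv hc
      cases t with
      | false =>
        intro v hv
        exact ihI true _ _ (inv_cons G A B v hinv) (hc v (llLegal_mono G A B hinv hv))
      | true =>
        rcases hc with hdead | ⟨v, hvB, hc⟩
        · exact Or.inl fun v hv => hdead v (llLegal_mono G A B hinv hv)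
        · by_cases hvA : llLegal G A h1 v
          · exact Or.inr ⟨v, hvA, ihI false _ _ (inv_cons G A B v hinv) hc⟩
          · -- v is illegal in the real game: N[v] ⊆ A ∪ tot h1
            have hsub : closedNbhd G v ⊆ A ∪ totDominatedBy G h1 := by
              intro w hw
              by_contra hnw
              exact hvA ⟨w, hw, hnw⟩
            have hinv' : B ∪ totDominatedBy G (v :: h2) ⊆ A ∪ totDominatedBy G h1 := by
              rw [totDominatedBy_cons]
              intro x hx
              rcases hx with hx | hx | hx
              · exact hinv (Or.inl hx)
              · exact hsub (Set.mem_insert_of_mem _ hx)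
              · exact hinv (Or.inr hx)
            exact ihP2 h1 (v :: h2) hinv' hc
    refine ⟨hI, ?_, ?_⟩
    · intro h1 h2 hinv hc
      intro u hu
      exact hI true (u :: h1) h2 (inv_extend G A B u hinv) hc
    · intro h1 h2 hinv hc
      by_cases hdead : ∀ v, ¬ llLegal G A h1 v
      · exact Or.inl hdead
      · push_neg at hdead
        obtain ⟨u, hu⟩ := hdead
        refine Or.inr ⟨u, hu, ?_⟩
        exact ihP1 (u :: h1) (u :: h2) (inv_cons G A B u hinv)
          (hc u (llLegal_mono G A B hinv hu))

/-- In a finite isolate-free graph, Dominator can always end the LL-game. -/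
lemma llGame_ends [Fintype V] (G : SimpleGraph V) (hG : isolateFree G) (A : Set V) :
    ∀ (m : ℕ) (h : List V), ((A ∪ totDominatedBy G h)ᶜ : Set V).ncard ≤ m →
      canEnd (llLegal G A) (2 * m + 1) true h := by
  intro m
  induction m with
  | zero =>
    intro h hm
    have hempty : ((A ∪ totDominatedBy G h)ᶜ : Set V) = ∅ := by
      rw [← Set.ncard_eq_zero (Set.toFinite _)]
      omega
    refine Or.inl fun v hv => ?_
    obtain ⟨w, _, hw2⟩ := hv
    have : w ∈ ((A ∪ totDominatedBy G h)ᶜ : Set V) := hw2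
    rw [hempty] at this
    exact this
  | succ m ih =>
    intro h hm
    by_cases hdead : ∀ v, ¬ llLegal G A h v
    · exact Or.inl hdead
    · push_neg at hdead
      obtain ⟨v, w, hw1, hw2⟩ := hdead
      -- find a legal move u whose open neighborhood contains an undominated vertex w0
      obtain ⟨u, w0, hu, hw0n, hw0⟩ :
          ∃ u w0, llLegal G A h u ∧ w0 ∈ G.neighborSet u ∧ w0 ∉ A ∪ totDominatedBy G h := by
        rcases hw1 with hw1 | hw1
        · -- w = v : play a neighbor of v
          obtain ⟨u, hadj⟩ := hG v
          subst hw1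
          refine ⟨u, w, ⟨w, Set.mem_insert_of_mem _ hadj.symm, hw2⟩, hadj.symm, hw2⟩
        · exact ⟨v, w, ⟨w, Set.mem_insert_of_mem _ hw1, hw2⟩, hw1, hw2⟩
      refine Or.inr ⟨u, hu, ?_⟩
      have key : ∀ h' : List V, totDominatedBy G (u :: h) ⊆ totDominatedBy G h' →
          ((A ∪ totDominatedBy G h')ᶜ : Set V).ncard ≤ m := by
        intro h' hsub
        have hss : ((A ∪ totDominatedBy G h')ᶜ : Set V) ⊂ (A ∪ totDominatedBy G h)ᶜ := by
          constructor
          · intro x hx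
            intro hc
            apply hx
            rcases hc with hc | hc
            · exact Or.inl hc
            · exact Or.inr (hsub (totDominatedBy_subset_cons G u h hc))
          · intro hle
            have hw0' : w0 ∈ ((A ∪ totDominatedBy G h)ᶜ : Set V) := hw0
            have : w0 ∈ ((A ∪ totDominatedBy G h')ᶜ : Set V) := hle hw0'
            apply this
            refine Or.inr (hsub ?_)
            rw [totDominatedBy_cons]
            exact Or.inl hw0n
        have := Set.ncard_lt_ncard hss (Set.toFinite _)
        omega
      -- after Dominator plays u, any Staller reply keeps the measure ≤ m
      intro v' hv'
      refine ih (v' :: u :: h) (key _ (totDominatedBy_subset_cons G v' (u :: h)))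

lemma llGame_ends' [Fintype V] (G : SimpleGraph V) (hG : isolateFree G) (A : Set V)
    (m : ℕ) (h : List V) (hm : ((A ∪ totDominatedBy G h)ᶜ : Set V).ncard ≤ m) :
    canEnd (llLegal G A) (2 * m + 2) false h := by
  intro v hv
  have hsub : ((A ∪ totDominatedBy G (v :: h))ᶜ : Set V) ⊆ (A ∪ totDominatedBy G h)ᶜ := by
    intro x hx hc
    apply hx
    rcases hc with hc | hc
    · exact Or.inl hc
    · exact Or.inr (totDominatedBy_subset_cons G v h hc)
  exact llGame_ends G hG A m (v :: h) (le_trans (Set.ncard_le_ncard hsub (Set.toFinite _)) hm)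

end ContinuationAux

/-- Continuation Principle for the LL-domination game on predominated graphs. -/
theorem continuation_principle_LL {V : Type*} [Fintype V] (G : SimpleGraph V)
    (hG : isolateFree G) (A B : Set V) (hBA : B ⊆ A) :
    gammaLLgA G A ≤ gammaLLgA G B ∧ gammaLLgA' G A ≤ gammaLLgA' G B := by
  have hinv : B ∪ totDominatedBy G ([] : List V) ⊆ A ∪ totDominatedBy G ([] : List V) := by
    have htot : totDominatedBy G ([] : List V) = ∅ := by simp [totDominatedBy]
    rw [htot]
    exact Set.union_subset_union_left ∅ hBA
  have hncard : ((B ∪ totDominatedBy G ([] : List V))ᶜ : Set V).ncard ≤ Fintype.card V := by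
    have h1 := Set.ncard_le_ncard
      (Set.subset_univ ((B ∪ totDominatedBy G ([] : List V))ᶜ : Set V)) (Set.toFinite _)
    simpa [Set.ncard_univ, Nat.card_eq_fintype_card] using h1
  constructor
  · have hne : {k | canEnd (llLegal G B) k true []}.Nonempty :=
      ⟨2 * Fintype.card V + 1, llGame_ends G hG B _ [] hncard⟩
    have hmem := Nat.sInf_mem hne
    exact Nat.sInf_le
      ((continuation_key G A B (sInf {k | canEnd (llLegal G B) k true []})).1
        true [] [] hinv hmem)
  · have hne : {k | canEnd (llLegal G B) k false []}.Nonempty :=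
      ⟨2 * Fintype.card V + 2, llGame_ends' G hG B _ [] hncard⟩
    have hmem := Nat.sInf_mem hne
    exact Nat.sInf_le
      ((continuation_key G A B (sInf {k | canEnd (llLegal G B) k false []})).1
        false [] [] hinv hmem)
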